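/- Envelope/derivative formula for the geodesic ray in t: let u : P → ℝ be strictly convex and continuous on a compact convex set P ⊂ ℝ^m, f : P → ℝ convex and continuous, and for t ≥ 0, ρ ∈ ℝ^m define ψ(t, ρ) = sup_{x ∈ P}(⟨ρ, x⟩ − u(x) − t f(x)), attained at the unique maximizer x_t(ρ). Then the right t-derivative of ψ(·, ρ) at t exists and equals −f(x_t(ρ)). -/
import Mathlib


open scoped RealInnerProductSpace

open Filter Set

/-- Envelope formula: the (right) `t`-derivative of
`ψ(t,ρ) = sup_{x ∈ P} (⟨ρ,x⟩ - u(x) - t f(x))` equals `-f(x_t(ρ))`, where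
`x_t(ρ)` is the unique maximizer. -/
theorem stmt12 {m : ℕ} (P : Set (EuclideanSpace ℝ (Fin m))) (hP : IsCompact P)
    (hPc : Convex ℝ P) (hPne : P.Nonempty)
    (u f : EuclideanSpace ℝ (Fin m) → ℝ)
    (hu : ContinuousOn u P) (hus : StrictConvexOn ℝ P u)
    (hf : ContinuousOn f P) (hfc : ConvexOn ℝ P f)
    (ρ : EuclideanSpace ℝ (Fin m)) (t : ℝ) (ht : 0 ≤ t)
    (xt : ℝ → EuclideanSpace ℝ (Fin m))
    (hxt : ∀ s, 0 ≤ s → xt s ∈ P ∧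
      ∀ y ∈ P, ⟪ρ, y⟫ - u y - s * f y ≤ ⟪ρ, xt s⟫ - u (xt s) - s * f (xt s)) :
    HasDerivWithinAt
      (fun s => sSup ((fun x => ⟪ρ, x⟫ - u x - s * f x) '' P))
      (-(f (xt t))) (Set.Ici t) t := by
  have hxtP : xt t ∈ P := (hxt t ht).1
  -- the sup is attained at `xt s`
  have key : ∀ s, 0 ≤ s →
      sSup ((fun x => ⟪ρ, x⟫ - u x - s * f x) '' P)
        = ⟪ρ, xt s⟫ - u (xt s) - s * f (xt s) := by
    intro s hs
    refine IsGreatest.csSup_eq ⟨⟨xt s, (hxt s hs).1, rfl⟩, ?_⟩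
    rintro _ ⟨y, hy, rfl⟩
    exact (hxt s hs).2 y hy
  -- uniqueness of the maximizer at time t
  have huniq : ∀ z ∈ P, z ≠ xt t →
      ⟪ρ, z⟫ - u z - t * f z < ⟪ρ, xt t⟫ - u (xt t) - t * f (xt t) := by
    intro z hz hne
    rcases lt_or_eq_of_le ((hxt t ht).2 z hz) with h | h
    · exact h
    · exfalso
      set w : EuclideanSpace ℝ (Fin m) := (1/2 : ℝ) • z + (1/2 : ℝ) • xt t with hw
      have hwP : w ∈ P := hPc hz hxtP (by norm_num) (by norm_num) (by norm_num)
      have hu' : u w < (1/2) * u z + (1/2) * u (xt t) :=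
        hus.2 hz hxtP hne one_half_pos one_half_pos (by norm_num)
      have hf' : f w ≤ (1/2) * f z + (1/2) * f (xt t) :=
        hfc.2 hz hxtP (by norm_num) (by norm_num) (by norm_num)
      have hinner : ⟪ρ, w⟫ = (1/2) * ⟪ρ, z⟫ + (1/2) * ⟪ρ, xt t⟫ := by
        simp [hw, inner_add_right, real_inner_smul_right, Finset.mul_sum,
          mul_left_comm, mul_comm, mul_assoc]
      have hfw : t * f w ≤ t * ((1/2) * f z + (1/2) * f (xt t)) :=
        mul_le_mul_of_nonneg_left hf' ht
      have hle := (hxt t ht).2 w hwP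
      nlinarith [hle, hinner, hu', hfw]
  -- bound for f on P
  obtain ⟨C, hC⟩ := hP.exists_bound_of_continuousOn hf
  have hC0 : 0 ≤ C := le_trans (norm_nonneg _) (hC hPne.choose hPne.choose_spec)
  -- continuity of the maximizer from the right
  have hxcont : Tendsto xt (nhdsWithin t (Ici t)) (nhds (xt t)) := by
    rw [Metric.tendsto_nhdsWithin_nhds]
    intro ε hε
    set K := P ∩ {x | ε ≤ dist x (xt t)} with hK
    by_cases hKne : K.Nonempty
    · have hKcl : IsClosed {x : EuclideanSpace ℝ (Fin m) | ε ≤ dist x (xt t)} :=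
        isClosed_le continuous_const (continuous_id.dist continuous_const)
      have hKc : IsCompact K := hP.inter_right hKcl
      have hKP : K ⊆ P := Set.inter_subset_left
      have hFc : ContinuousOn (fun x => ⟪ρ, x⟫ - u x - t * f x) K := by
        refine ContinuousOn.sub (ContinuousOn.sub ?_ (hu.mono hKP))
          (continuousOn_const.mul (hf.mono hKP))
        exact (Continuous.inner continuous_const continuous_id).continuousOn
      obtain ⟨z, hzK, hzmax⟩ := hKc.exists_isMaxOn hKne hFc
      have hzne : z ≠ xt t := by
        intro hzeq
        have := hzK.2
        simp only [Set.mem_setOf_eq, hzeq, dist_self] at this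
        linarith
      have hM : ⟪ρ, z⟫ - u z - t * f z < ⟪ρ, xt t⟫ - u (xt t) - t * f (xt t) :=
        huniq z (hKP hzK) hzne
      set γ : ℝ := (⟪ρ, xt t⟫ - u (xt t) - t * f (xt t)) - (⟪ρ, z⟫ - u z - t * f z) with hγ
      have hγpos : 0 < γ := sub_pos.mpr hM
      refine ⟨γ / (2 * (C + 1)), by positivity, ?_⟩
      intro s hs hsd
      have hst : t ≤ s := hs
      by_contra hcon
      have hsε : ε ≤ dist (xt s) (xt t) := not_lt.1 hcon
      have hs0 : 0 ≤ s := le_trans ht hs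
      have hxsP : xt s ∈ P := (hxt s hs0).1
      have hxsK : xt s ∈ K := ⟨hxsP, hsε⟩
      have h1 : ⟪ρ, xt s⟫ - u (xt s) - t * f (xt s) ≤ ⟪ρ, z⟫ - u z - t * f z :=
        hzmax hxsK
      have h2 := (hxt s hs0).2 (xt t) hxtP
      have hb1 := abs_le.1 (hC _ hxsP)
      have hb2 := abs_le.1 (hC _ hxtP)
      have hd : s - t < γ / (2 * (C + 1)) := by
        have : dist s t = s - t := by
          rw [Real.dist_eq, abs_of_nonneg (by linarith)]
        linarith [hsd, this.ge]
      have hd0 : 0 ≤ s - t := by linarith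
      have hmul : (s - t) * (f (xt t) - f (xt s)) ≤ (s - t) * (2 * C) :=
        mul_le_mul_of_nonneg_left (by linarith) hd0
      have hmul2 : (s - t) * (2 * C) ≤ γ / (2 * (C + 1)) * (2 * C) :=
        mul_le_mul_of_nonneg_right hd.le (by positivity)
      have hfrac : γ / (2 * (C + 1)) * (2 * C) < γ := by
        rw [div_mul_eq_mul_div, div_lt_iff₀ (by positivity)]
        nlinarith
      -- from h2: γ ≤ (s-t)*(f (xt t) - f (xt s))
      have hkey : γ ≤ (s - t) * (f (xt t) - f (xt s)) := by
        simp only [hγ]; nlinarith [h1, h2]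
      linarith
    · refine ⟨1, one_pos, ?_⟩
      intro s hs _
      by_contra hcon
      exact hKne ⟨xt s, (hxt s (le_trans ht hs)).1, not_lt.1 hcon⟩
  -- f ∘ xt is continuous from the right
  have hxP : Tendsto xt (nhdsWithin t (Ici t)) (nhdsWithin (xt t) P) := by
    rw [tendsto_nhdsWithin_iff]
    refine ⟨hxcont, eventually_nhdsWithin_of_forall fun s hs => (hxt s (le_trans ht hs)).1⟩
  have hftend : Tendsto (fun s => f (xt s)) (nhdsWithin t (Ici t)) (nhds (f (xt t))) :=
    (hf (xt t) hxtP).tendsto.comp hxP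
  -- squeeze the slope
  rw [hasDerivWithinAt_iff_tendsto_slope]
  have hdiff : Set.Ici t \ {t} = Set.Ioi t := Set.Ici_sdiff_left
  rw [hdiff]
  have hupper : Tendsto (fun s => -(f (xt s))) (nhdsWithin t (Ioi t)) (nhds (-(f (xt t)))) :=
    (hftend.mono_left (nhdsWithin_mono _ Set.Ioi_subset_Ici_self)).neg
  refine tendsto_of_tendsto_of_tendsto_of_le_of_le' tendsto_const_nhds hupper ?_ ?_
  · filter_upwards [self_mem_nhdsWithin] with s hs
    have hts : t < s := hs
    have hs0 : 0 ≤ s := le_trans ht hts.le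
    rw [slope_def_field]
    rw [key s hs0, key t ht]
    have h2 := (hxt s hs0).2 (xt t) hxtP
    have hpos : 0 < s - t := by linarith
    rw [le_div_iff₀ hpos]
    nlinarith [h2]
  · filter_upwards [self_mem_nhdsWithin] with s hs
    have hts : t < s := hs
    have hs0 : 0 ≤ s := le_trans ht hts.le
    rw [slope_def_field]
    rw [key s hs0, key t ht]
    have h1 := (hxt t ht).2 (xt s) (hxt s hs0).1
    have hpos : 0 < s - t := by linarith
    rw [div_le_iff₀ hpos]
    nlinarith [h1]
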